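/- Assume the abstract linear-stability data (see context). Let T > 0, α ≥ 1, and 0 < ε ≤ (4·C·M₁·K_T²·α²)⁻¹. Let v₀ ∈ 𝒳 with ‖v₀‖ ≤ α·ε, let w, z : ℝ → 𝒳 with ‖w(t)‖ ≤ ε/4 for all t ∈ [0,T], and define u(t) := Φ(t)(u*) + S₀(t)(v₀) + w(t) + z(t). Then for every t ∈ [0,T]: ‖u(t) − Φ(t)( Ψ( exp(t·L)(𝒫 v₀) )(u*) )‖ ≤ (M₃·α·e^{−a·t} + 1/2)·ε + ‖z(t)‖. -/

import Mathlib

/-- **Pathwise estimate on the good event** (deterministic content of Lemma 6.1).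
Under the abstract linear-stability data, if `‖v₀‖ ≤ αε`, `0 < ε ≤ (4CM₁K_T²α²)⁻¹`, and the
stochastic convolution `w` satisfies `‖w(t)‖ ≤ ε/4` on `[0,T]`, then the solution
`u(t) = Φ(t)u* + S₀(t)v₀ + w(t) + z(t)` satisfies
`‖u(t) − Φ(t)(Ψ(exp(tL)𝒫v₀)u*)‖ ≤ (M₃ α e^{−at} + 1/2)ε + ‖z(t)‖` on `[0,T]`. -/
theorem pathwise_estimate_good_event
    {𝒳 : Type*} [NormedAddCommGroup 𝒳] [NormedSpace ℝ 𝒳] [CompleteSpace 𝒳]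
    {g : Type*} [NormedAddCommGroup g] [NormedSpace ℝ g] [FiniteDimensional ℝ g]
    (ustar : 𝒳) (C M₁ M₃ a : ℝ) (hC : 0 < C) (hM₁ : 0 < M₁) (hM₃ : 0 < M₃) (ha : 0 < a)
    (p : g →L[ℝ] 𝒳) (P : 𝒳 →L[ℝ] g) (L : g →L[ℝ] g)
    (Φ : ℝ → 𝒳 →L[ℝ] 𝒳) (S₀ : ℝ → 𝒳 →L[ℝ] 𝒳) (Ψ : g → 𝒳 →L[ℝ] 𝒳) (Ps : 𝒳 →L[ℝ] 𝒳)
    (hΦBdd : ∀ t : ℝ, 0 ≤ t → ‖Φ t‖ ≤ M₁)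
    (hΨTaylor : ∀ Z : g, ‖Ψ Z ustar - ustar - p Z‖ ≤ C * ‖Z‖ ^ 2)
    (hS₀decomp : ∀ t : ℝ, 0 ≤ t → ∀ φ : 𝒳,
      S₀ t φ = Φ t (p (NormedSpace.exp (t • L) (P φ))) + S₀ t (Ps φ))
    (hStable : ∀ t : ℝ, 0 ≤ t → ‖(S₀ t).comp Ps‖ ≤ M₃ * Real.exp (-a * t))
    (T : ℝ) (hT : 0 < T)
    (KT : ℝ)
    (hKT : KT = ⨆ t : Set.Icc (0 : ℝ) T, ‖(NormedSpace.exp ((t : ℝ) • L)).comp P‖)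
    (α ε : ℝ) (hα : 1 ≤ α) (hε : 0 < ε) (hεsmall : ε ≤ (4 * C * M₁ * KT ^ 2 * α ^ 2)⁻¹)
    (v₀ : 𝒳) (hv₀ : ‖v₀‖ ≤ α * ε)
    (w z : ℝ → 𝒳) (hw : ∀ t ∈ Set.Icc (0 : ℝ) T, ‖w t‖ ≤ ε / 4)
    (u : ℝ → 𝒳) (hu : ∀ t : ℝ, u t = Φ t ustar + S₀ t v₀ + w t + z t) :
    ∀ t ∈ Set.Icc (0 : ℝ) T,
      ‖u t - Φ t (Ψ (NormedSpace.exp (t • L) (P v₀)) ustar)‖ ≤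
        (M₃ * α * Real.exp (-a * t) + 1 / 2) * ε + ‖z t‖ := by

  intro t ht
  obtain ⟨ht0, htT⟩ := ht
  set Z : g := NormedSpace.exp (t • L) (P v₀) with hZdef
  -- continuity of s ↦ ‖exp(sL) ∘ P‖
  have hcont : Continuous fun s : ℝ => ‖(NormedSpace.exp (s • L)).comp P‖ := by
    have h1 : Continuous fun s : ℝ => NormedSpace.exp (s • L) :=
      (continuous_iff_continuousAt.2 fun x => (NormedSpace.exp_analytic (𝕂 := ℝ) x).continuousAt).comp (continuous_id.smul continuous_const)
    have h2 : Continuous fun A : g →L[ℝ] g => A.comp P :=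
      ((ContinuousLinearMap.compL ℝ 𝒳 g g).flip P).continuous
    exact (h2.comp h1).norm
  have hbdd : BddAbove (Set.range fun s : Set.Icc (0 : ℝ) T =>
      ‖(NormedSpace.exp ((s : ℝ) • L)).comp P‖) := by
    have h : BddAbove ((fun s : ℝ => ‖(NormedSpace.exp (s • L)).comp P‖) '' Set.Icc (0 : ℝ) T) :=
      ((isCompact_Icc).image hcont).bddAbove
    rwa [Set.image_eq_range] at h
  have hKTt : ‖(NormedSpace.exp (t • L)).comp P‖ ≤ KT := by
    rw [hKT]
    exact le_ciSup hbdd ⟨t, ht0, htT⟩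
  have hKT0 : (0 : ℝ) ≤ KT := le_trans (norm_nonneg _) hKTt
  have hZle : ‖Z‖ ≤ KT * (α * ε) := by
    have h1 : ‖Z‖ ≤ ‖(NormedSpace.exp (t • L)).comp P‖ * ‖v₀‖ :=
      ((NormedSpace.exp (t • L)).comp P).le_opNorm v₀
    have h2 : ‖(NormedSpace.exp (t • L)).comp P‖ * ‖v₀‖ ≤ KT * (α * ε) :=
      mul_le_mul hKTt hv₀ (norm_nonneg _) hKT0
    exact h1.trans h2
  have hαε : (0 : ℝ) ≤ α * ε := mul_nonneg (by linarith) hε.le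
  have hpos : 0 < 4 * C * M₁ * KT ^ 2 * α ^ 2 := by
    by_contra h
    push_neg at h
    have : (4 * C * M₁ * KT ^ 2 * α ^ 2)⁻¹ ≤ 0 := inv_nonpos.mpr h
    linarith
  have hkey : ε * (4 * C * M₁ * KT ^ 2 * α ^ 2) ≤ 1 := by
    have := mul_le_mul_of_nonneg_right hεsmall hpos.le
    rwa [inv_mul_cancel₀ (ne_of_gt hpos)] at this
  have hquad : M₁ * (C * ‖Z‖ ^ 2) ≤ ε / 4 := by
    have hZ2 : ‖Z‖ ^ 2 ≤ (KT * (α * ε)) ^ 2 := by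
      have := pow_le_pow_left₀ (norm_nonneg Z) hZle 2
      simpa using this
    nlinarith [norm_nonneg Z, hε, hkey, mul_pos hC hM₁]
  -- decomposition
  have hdecomp : u t - Φ t (Ψ Z ustar) =
      Φ t (ustar + p Z - Ψ Z ustar) + ((S₀ t).comp Ps) v₀ + w t + z t := by
    rw [hu t, hS₀decomp t ht0 v₀]
    simp only [map_add, map_sub, ContinuousLinearMap.comp_apply, ← hZdef]
    abel
  have hexp0 : (0 : ℝ) ≤ Real.exp (-a * t) := (Real.exp_pos _).le
  have h1 : ‖Φ t (ustar + p Z - Ψ Z ustar)‖ ≤ ε / 4 := by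
    have hn : ‖ustar + p Z - Ψ Z ustar‖ = ‖Ψ Z ustar - ustar - p Z‖ := by
      rw [← norm_neg]; congr 1; abel
    calc ‖Φ t (ustar + p Z - Ψ Z ustar)‖
        ≤ ‖Φ t‖ * ‖ustar + p Z - Ψ Z ustar‖ := (Φ t).le_opNorm _
      _ ≤ M₁ * (C * ‖Z‖ ^ 2) := by
          rw [hn]
          exact mul_le_mul (hΦBdd t ht0) (hΨTaylor Z) (norm_nonneg _) hM₁.le
      _ ≤ ε / 4 := hquad
  have h2 : ‖((S₀ t).comp Ps) v₀‖ ≤ M₃ * Real.exp (-a * t) * (α * ε) := by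
    calc ‖((S₀ t).comp Ps) v₀‖ ≤ ‖(S₀ t).comp Ps‖ * ‖v₀‖ := ContinuousLinearMap.le_opNorm _ _
      _ ≤ M₃ * Real.exp (-a * t) * (α * ε) :=
        mul_le_mul (hStable t ht0) hv₀ (norm_nonneg _) (by positivity)
  have h3 : ‖w t‖ ≤ ε / 4 := hw t ⟨ht0, htT⟩
  have htri : ‖u t - Φ t (Ψ Z ustar)‖ ≤
      ‖Φ t (ustar + p Z - Ψ Z ustar)‖ + ‖((S₀ t).comp Ps) v₀‖ + ‖w t‖ + ‖z t‖ := by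
    rw [hdecomp]
    exact le_trans (norm_add_le _ _) (by
      have := le_trans (norm_add_le (Φ t (ustar + p Z - Ψ Z ustar) + ((S₀ t).comp Ps) v₀) (w t))
        (add_le_add_left (norm_add_le _ _) _)
      linarith)
  have : M₃ * Real.exp (-a * t) * (α * ε) = M₃ * α * Real.exp (-a * t) * ε := by ring
  rw [hZdef] at htri ⊢ <;> skip
  linarith
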